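/- Strong quasitriangle inequality for relative excess: if A, B, C ⊆ ℝⁿ with B, C nonempty, x ∈ ℝⁿ, r > 0, and d^{x,r}(A,B) ≤ ε, then d^{x,r}(A,C) ≤ d^{x,r}(A,B) + (1+ε) d^{x,r(1+ε)}(closure(B), C). -/

import Mathlib

open Metric Set Filter Topology Pointwise

noncomputable section

/-- Excess of `A` over `B`: `sup_{a ∈ A} inf_{b ∈ B} |a - b|` (extended-real valued). -/
def ex {n : ℕ} (A B : Set (EuclideanSpace ℝ (Fin n))) : ENNReal :=
  ⨆ a ∈ A, EMetric.infEdist a B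

/-- Relative excess of `A` in the closed ball `B(x,r)` over `B`. -/
def relEx {n : ℕ} (x : EuclideanSpace ℝ (Fin n)) (r : ℝ)
    (A B : Set (EuclideanSpace ℝ (Fin n))) : ℝ :=
  (ex (A ∩ closedBall x r) B).toReal / r

/-- Relative Walkup–Wets distance in `B(x,r)`. -/
def WW {n : ℕ} (x : EuclideanSpace ℝ (Fin n)) (r : ℝ)
    (A B : Set (EuclideanSpace ℝ (Fin n))) : ℝ :=
  max (relEx x r A B) (relEx x r B A)

lemma ex_lt_top' {n : ℕ} {S B : Set (EuclideanSpace ℝ (Fin n))} {x : EuclideanSpace ℝ (Fin n)}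
    {R : ℝ} (hS : S ⊆ closedBall x R) (hB : B.Nonempty) : ex S B < ⊤ := by
  obtain ⟨b0, hb0⟩ := hB
  have h : ex S B ≤ ENNReal.ofReal R + edist x b0 := by
    refine iSup₂_le fun a ha => ?_
    calc EMetric.infEdist a B ≤ edist a b0 := EMetric.infEdist_le_edist_of_mem hb0
      _ ≤ edist a x + edist x b0 := edist_triangle _ _ _
      _ ≤ ENNReal.ofReal R + edist x b0 := by
          gcongr
          rw [edist_dist]
          exact ENNReal.ofReal_le_ofReal (mem_closedBall.mp (hS ha))
  exact h.trans_lt (ENNReal.add_lt_top.mpr ⟨ENNReal.ofReal_lt_top, edist_lt_top x b0⟩)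

/-- Strong quasitriangle inequality for the relative excess. -/
theorem relEx_strong_quasitriangle {n : ℕ} (A B C : Set (EuclideanSpace ℝ (Fin n)))
    (hB : B.Nonempty) (hC : C.Nonempty) (x : EuclideanSpace ℝ (Fin n)) (r : ℝ) (hr : 0 < r)
    (ε : ℝ) (hε : relEx x r A B ≤ ε) :
    relEx x r A C ≤ relEx x r A B + (1 + ε) * relEx x (r * (1 + ε)) (closure B) C := by
  have hε0 : 0 ≤ ε := le_trans (div_nonneg ENNReal.toReal_nonneg hr.le) hε
  have h1ε : 0 < 1 + ε := by linarith
  set S := A ∩ closedBall x r with hSdef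
  set T := closure B ∩ closedBall x (r * (1 + ε)) with hTdef
  have hSsub : S ⊆ closedBall x r := inter_subset_right
  have hTsub : T ⊆ closedBall x (r * (1 + ε)) := inter_subset_right
  have hexSB : ex S B < ⊤ := ex_lt_top' hSsub hB
  have hexTC : ex T C < ⊤ := ex_lt_top' hTsub hC
  have hSB_le : (ex S B).toReal ≤ r * ε := by
    have h := (div_le_iff₀ hr).mp hε
    simpa [mul_comm] using h
  have key : ex S C ≤ ex S B + ex T C := by
    refine iSup₂_le fun a ha => ?_
    have haB : EMetric.infEdist a B ≤ ex S B :=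
      le_iSup₂ (f := fun a (_ : a ∈ S) => EMetric.infEdist a B) a ha
    obtain ⟨b, hbB, hb⟩ := isClosed_closure.exists_infDist_eq_dist hB.closure a
    have hdab : dist a b ≤ (ex S B).toReal := by
      rw [← hb, Metric.infDist_closure, Metric.infDist]
      exact ENNReal.toReal_mono hexSB.ne haB
    have hbT : b ∈ T := by
      refine ⟨hbB, mem_closedBall.mpr ?_⟩
      have haS : dist a x ≤ r := mem_closedBall.mp (hSsub ha)
      have := dist_triangle b a x
      rw [dist_comm b a] at this
      linarith
    calc EMetric.infEdist a C ≤ edist a b + EMetric.infEdist b C :=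
          EMetric.infEdist_le_edist_add_infEdist
      _ ≤ ex S B + ex T C := by
          gcongr
          · rw [edist_dist]
            calc ENNReal.ofReal (dist a b) ≤ ENNReal.ofReal (ex S B).toReal :=
                  ENNReal.ofReal_le_ofReal hdab
              _ = ex S B := ENNReal.ofReal_toReal hexSB.ne
          · exact le_iSup₂ (f := fun b (_ : b ∈ T) => EMetric.infEdist b C) b hbT
  have hto : (ex S C).toReal ≤ (ex S B).toReal + (ex T C).toReal := by
    have h := ENNReal.toReal_mono (a := ex S C)
      (by finiteness : ex S B + ex T C ≠ ⊤) key
    rwa [ENNReal.toReal_add hexSB.ne hexTC.ne] at h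
  have heq : (1 + ε) * ((ex T C).toReal / (r * (1 + ε))) = (ex T C).toReal / r := by
    field_simp
  show (ex S C).toReal / r ≤ (ex S B).toReal / r + (1 + ε) * ((ex T C).toReal / (r * (1 + ε)))
  rw [heq, ← add_div]
  gcongr
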